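/- The subalgebra 𝒮 of arithmetic functions whose support has only finitely many prime divisors is algebraically closed in the Dirichlet convolution ring 𝒜: every f ∈ 𝒜 that is algebraic over 𝒮 already belongs to 𝒮. -/

import Mathlib

open ArithmeticFunction
open scoped Classical

/-- The embedding of `ℂ` into the Dirichlet ring of arithmetic functions,
sending `c` to the function with value `c` at `1` and `0` elsewhere. -/
noncomputable def CC : ℂ →+* ArithmeticFunction ℂ where
  toFun c := ⟨fun n => if n = 1 then c else 0, by simp⟩
  map_zero' := by ext n; simp
  map_one' := by ext n; simp [ArithmeticFunction.one_apply]
  map_add' a b := by ext n; erw [ArithmeticFunction.add_apply]; by_cases h : n = 1 <;> simp [h]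
  map_mul' a b := by
    ext n
    erw [mul_apply]
    by_cases h : n = 1
    · subst h
      rw [show Nat.divisorsAntidiagonal 1 = {(1,1)} from rfl]
      simp
    · rw [Finset.sum_eq_zero]
      · simp [h]
      · rintro ⟨d, e⟩ hde
        rw [Nat.mem_divisorsAntidiagonal] at hde
        rcases Decidable.eq_or_ne d 1 with hd | hd
        · have : e ≠ 1 := by rintro rfl; exact h (by simp [← hde.1, hd])
          simp [this]
        · simp [hd]

/-- The order `v f` of an arithmetic function: the least element of the support
(`sInf` of the empty set is `0` for `f = 0`; that case is always excluded by hypotheses). -/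
noncomputable def ordN (f : ArithmeticFunction ℂ) : ℕ := sInf {n : ℕ | f n ≠ 0}

/-- The order as an extended natural number, `⊤` for `f = 0`. -/
noncomputable def ordE (f : ArithmeticFunction ℂ) : ℕ∞ :=
  sInf ((fun n : ℕ => (n : ℕ∞)) '' {n : ℕ | f n ≠ 0})

/-- The norm `‖f‖ = 1/v(f)`, with `1/∞ = 0`. -/
noncomputable def nrm (f : ArithmeticFunction ℂ) : ℝ :=
  if f = 0 then 0 else 1 / (ordN f : ℝ)

/-- Extension of an arithmetic function to `ℝ`, vanishing off `ℕ`. -/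
noncomputable def extR (f : ArithmeticFunction ℂ) (x : ℝ) : ℂ :=
  if h : ∃ n : ℕ, (n : ℝ) = x then f h.choose else 0

/-- The exponential map `Exp f = exp(f 1) * ∑ (f - f 1)^k / k!` of the Dirichlet ring.
Since `(f - f 1)^k` has order `≥ 2^k`, the value of the infinite series at `n` equals the
value of the partial sum up to `k = n`. -/
noncomputable def ExpA (f : ArithmeticFunction ℂ) : ArithmeticFunction ℂ :=
  ⟨fun n => Complex.exp (f 1) *
      ((∑ k ∈ Finset.range (n + 1),
        CC ((Nat.factorial k : ℂ)⁻¹) * (f - CC (f 1)) ^ k) n), by simp⟩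

/-- The `p`-basic derivation `(∂_p f) n = v_p (n p) • f (n p)`. -/
noncomputable def DP (p : ℕ) (f : ArithmeticFunction ℂ) : ArithmeticFunction ℂ :=
  ⟨fun n => (padicValNat p (n * p) : ℂ) * f (n * p), by simp⟩

/-- The log-derivation `(∂_L f) n = log n * f n`. -/
noncomputable def DL (f : ArithmeticFunction ℂ) : ArithmeticFunction ℂ :=
  ⟨fun n => (Real.log n : ℂ) * f n, by simp⟩

/-- The pointwise multiplication operator `𝔪_g`. -/
noncomputable def MG (g f : ArithmeticFunction ℂ) : ArithmeticFunction ℂ :=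
  ⟨fun n => g n * f n, by simp⟩

/-- Integer powers `𝔪_g^i` of the pointwise multiplication operator:
`(𝔪_g^i f) n = (g n)^i * f n`. -/
noncomputable def MGi (g : ArithmeticFunction ℂ) (i : ℤ) (f : ArithmeticFunction ℂ) :
    ArithmeticFunction ℂ := ⟨fun n => g n ^ i * f n, by simp⟩

/-- `D` is a (ℂ-linear) derivation of the ring of arithmetic functions
under Dirichlet convolution. -/
def IsDerivationA (D : ArithmeticFunction ℂ → ArithmeticFunction ℂ) : Prop :=
  (∀ f g, D (f + g) = D f + D g) ∧
  (∀ (c : ℂ) (f), D (CC c * f) = CC c * D f) ∧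
  (∀ f g, D (f * g) = D f * g + f * D g)

/-- Convergence of a sequence of arithmetic functions in the norm topology. -/
def TendstoA (s : ℕ → ArithmeticFunction ℂ) (l : ArithmeticFunction ℂ) : Prop :=
  Filter.Tendsto (fun m => nrm (s m - l)) Filter.atTop (nhds 0)

/-- (Sequential) continuity of a map in the norm topology, which for this
ultrametric is equivalent to continuity. -/
def ContinuousA (D : ArithmeticFunction ℂ → ArithmeticFunction ℂ) : Prop :=
  ∀ (s : ℕ → ArithmeticFunction ℂ) (l), TendstoA s l → TendstoA (fun m => D (s m)) (D l)

/-- The indicator function `e_m` of the singleton `{m}`. -/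
noncomputable def En (m : ℕ) : ArithmeticFunction ℂ :=
  ⟨fun n => if 0 < n ∧ n = m then 1 else 0, by simp⟩

/-- The constant one arithmetic function `𝟙`. -/
noncomputable def OneA : ArithmeticFunction ℂ := ⟨fun n => if n = 0 then 0 else 1, by simp⟩

/-- The ℂ-algebra structure of the ring of arithmetic functions, via `CC`. -/
noncomputable instance : Algebra ℂ (ArithmeticFunction ℂ) := CC.toAlgebra

/-- `f` has finitely generated support: only finitely many primes divide members of
the support of `f`, i.e. `f ∈ 𝒮`. -/
def FinPrimeSupp (f : ArithmeticFunction ℂ) : Prop :=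
  {p : ℕ | p.Prime ∧ ∃ n : ℕ, f n ≠ 0 ∧ p ∣ n}.Finite
section AuxStmt16

lemma CC_apply' (c : ℂ) (n : ℕ) : CC c n = if n = 1 then c else 0 := rfl

lemma CC_mul_apply' (c : ℂ) (f : ArithmeticFunction ℂ) (n : ℕ) :
    (CC c * f) n = c * f n := by
  rcases eq_or_ne n 0 with rfl | hn
  · simp
  · rw [mul_apply, Finset.sum_eq_single_of_mem (1, n)
      (Nat.mem_divisorsAntidiagonal.2 ⟨one_mul n, hn⟩)]
    · simp [CC_apply']
    · rintro ⟨d, e⟩ hde hne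
      rw [Nat.mem_divisorsAntidiagonal] at hde
      rcases eq_or_ne d 1 with rfl | hd
      · have he : e = n := by rw [← hde.1, one_mul]
        subst he
        exact absurd rfl hne
      · simp [CC_apply', hd]

lemma natCast_mul_apply' (f : ArithmeticFunction ℂ) (k : ℕ) (n : ℕ) :
    (f * (k : ArithmeticFunction ℂ)) n = (k : ℂ) * f n := by
  rw [← map_natCast CC k, mul_comm, CC_mul_apply']

instance : CharZero (ArithmeticFunction ℂ) := by
  constructor
  intro a b h
  have h1 : ((a : ℕ) : ℂ) = ((b : ℕ) : ℂ) := by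
    have h2 : CC ((a : ℕ) : ℂ) = CC ((b : ℕ) : ℂ) := by
      rw [map_natCast, map_natCast]; exact h
    have h3 := congrArg (fun g : ArithmeticFunction ℂ => g 1) h2
    simpa only [CC_apply', if_pos] using h3
  exact_mod_cast h1

lemma exists_supp_nonempty {f : ArithmeticFunction ℂ} (hf : f ≠ 0) :
    {n : ℕ | f n ≠ 0}.Nonempty := by
  by_contra h
  rw [Set.not_nonempty_iff_eq_empty, Set.eq_empty_iff_forall_notMem] at h
  exact hf (ArithmeticFunction.ext fun n => not_not.1 (h n))

instance : NoZeroDivisors (ArithmeticFunction ℂ) := by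
  constructor
  intro f g h
  by_contra hc
  push_neg at hc
  obtain ⟨hf, hg⟩ := hc
  set a := sInf {n : ℕ | f n ≠ 0} with hadef
  set b := sInf {n : ℕ | g n ≠ 0} with hbdef
  have hfa : f a ≠ 0 := Nat.sInf_mem (exists_supp_nonempty hf)
  have hgb : g b ≠ 0 := Nat.sInf_mem (exists_supp_nonempty hg)
  have ha0 : a ≠ 0 := fun h0 => hfa (by rw [h0]; exact f.map_zero)
  have hb0 : b ≠ 0 := fun h0 => hgb (by rw [h0]; exact g.map_zero)
  have hab : (f * g) (a * b) = f a * g b := by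
    rw [mul_apply, Finset.sum_eq_single_of_mem (a, b)
      (Nat.mem_divisorsAntidiagonal.2 ⟨rfl, mul_ne_zero ha0 hb0⟩)]
    rintro ⟨d, e⟩ hde hne
    rw [Nat.mem_divisorsAntidiagonal] at hde
    by_contra hterm
    have hfd : f d ≠ 0 := fun h' => hterm (by rw [h', zero_mul])
    have hge : g e ≠ 0 := fun h' => hterm (by rw [h', mul_zero])
    have hda : a ≤ d := Nat.sInf_le hfd
    have heb : b ≤ e := Nat.sInf_le hge
    have hd : d = a := by
      by_contra hda'
      have h1 : a * b < d * b :=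
        mul_lt_mul_of_pos_right (lt_of_le_of_ne hda (Ne.symm hda')) (Nat.pos_of_ne_zero hb0)
      have h2 : d * b ≤ d * e := Nat.mul_le_mul le_rfl heb
      exact lt_irrefl (a * b) (by calc a * b < d * b := h1
                                     _ ≤ d * e := h2
                                     _ = a * b := hde.1)
    subst hd
    have he : e = b := Nat.eq_of_mul_eq_mul_left (Nat.pos_of_ne_zero ha0) hde.1
    subst he
    exact absurd rfl hne
  rw [h, ArithmeticFunction.zero_apply] at hab
  exact mul_ne_zero hfa hgb hab.symm

lemma DP_apply' (p : ℕ) (f : ArithmeticFunction ℂ) (n : ℕ) :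
    DP p f n = (padicValNat p (n * p) : ℂ) * f (n * p) := rfl

lemma DP_add' (p : ℕ) (f g : ArithmeticFunction ℂ) : DP p (f + g) = DP p f + DP p g := by
  ext n
  simp [DP_apply', mul_add]

/-- `DP p` as an additive monoid hom. -/
noncomputable def DPhom (p : ℕ) : ArithmeticFunction ℂ →+ ArithmeticFunction ℂ where
  toFun := DP p
  map_zero' := by ext n; simp [DP_apply']
  map_add' := DP_add' p

lemma DP_one' {p : ℕ} (hp : p.Prime) : DP p (1 : ArithmeticFunction ℂ) = 0 := by
  ext n
  have hne : n * p ≠ 1 := by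
    intro h1
    exact hp.one_lt.ne' (Nat.dvd_one.mp (h1 ▸ dvd_mul_left p n))
  simp [DP_apply', ArithmeticFunction.one_apply, hne]

lemma DP_mul' {p : ℕ} (hp : p.Prime) (f g : ArithmeticFunction ℂ) :
    DP p (f * g) = DP p f * g + f * DP p g := by
  haveI : Fact p.Prime := ⟨hp⟩
  have hp0 : p ≠ 0 := hp.pos.ne'
  ext n
  rcases eq_or_ne n 0 with rfl | hn
  · simp [DP_apply', mul_apply]
  rw [ArithmeticFunction.add_apply, DP_apply', mul_apply, mul_apply, mul_apply,
    Finset.mul_sum]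
  have hnp : n * p ≠ 0 := mul_ne_zero hn hp0
  have key : ∀ x ∈ Nat.divisorsAntidiagonal (n * p),
      (padicValNat p (n * p) : ℂ) * (f x.1 * g x.2)
        = (padicValNat p x.1 : ℂ) * (f x.1 * g x.2)
          + (padicValNat p x.2 : ℂ) * (f x.1 * g x.2) := by
    rintro ⟨u, v⟩ hx
    rw [Nat.mem_divisorsAntidiagonal] at hx
    have hu : u ≠ 0 := fun h0 => hx.2 (by rw [← hx.1, h0, zero_mul])
    have hv : v ≠ 0 := fun h0 => hx.2 (by rw [← hx.1, h0, mul_zero])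
    have hval : padicValNat p (n * p) = padicValNat p u + padicValNat p v := by
      rw [← hx.1, padicValNat.mul hu hv]
    rw [hval]
    push_cast
    ring
  rw [Finset.sum_congr rfl key, Finset.sum_add_distrib]
  congr 1
  · -- first sum
    rw [← Finset.sum_filter_of_ne
      (p := fun x : ℕ × ℕ => p ∣ x.1)
      (f := fun x : ℕ × ℕ => (padicValNat p x.1 : ℂ) * (f x.1 * g x.2))
      (fun x _ hx0 => by
        by_contra hdvd
        have hx0' : (padicValNat p x.1 : ℂ) * (f x.1 * g x.2) ≠ 0 := hx0
        rw [padicValNat.eq_zero_of_not_dvd hdvd] at hx0'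
        simp at hx0')]
    refine Finset.sum_nbij' (fun x : ℕ × ℕ => (x.1 / p, x.2))
      (fun y : ℕ × ℕ => (y.1 * p, y.2)) ?_ ?_ ?_ ?_ ?_
    · rintro ⟨u, v⟩ hx
      dsimp only
      rw [Finset.mem_filter, Nat.mem_divisorsAntidiagonal] at hx
      obtain ⟨⟨h1, _⟩, hdvd⟩ := hx
      refine Nat.mem_divisorsAntidiagonal.2 ⟨?_, hn⟩
      have : u / p * v * p = n * p := by
        rw [mul_right_comm, Nat.div_mul_cancel hdvd, h1]
      exact Nat.eq_of_mul_eq_mul_right hp.pos this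
    · rintro ⟨u, v⟩ hx
      dsimp only
      rw [Nat.mem_divisorsAntidiagonal] at hx
      refine Finset.mem_filter.2 ⟨Nat.mem_divisorsAntidiagonal.2 ⟨?_, hnp⟩, ?_⟩
      · rw [mul_right_comm, hx.1]
      · exact ⟨u, mul_comm u p⟩
    · rintro ⟨u, v⟩ hx
      rw [Finset.mem_filter] at hx
      dsimp only
      rw [Nat.div_mul_cancel hx.2]
    · rintro ⟨u, v⟩ _
      dsimp only
      rw [Nat.mul_div_cancel _ hp.pos]
    · rintro ⟨u, v⟩ hx
      rw [Finset.mem_filter] at hx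
      dsimp only
      simp only [DP_apply']
      rw [Nat.div_mul_cancel hx.2]
      ring
  · -- second sum
    rw [← Finset.sum_filter_of_ne
      (p := fun x : ℕ × ℕ => p ∣ x.2)
      (f := fun x : ℕ × ℕ => (padicValNat p x.2 : ℂ) * (f x.1 * g x.2))
      (fun x _ hx0 => by
        by_contra hdvd
        have hx0' : (padicValNat p x.2 : ℂ) * (f x.1 * g x.2) ≠ 0 := hx0
        rw [padicValNat.eq_zero_of_not_dvd hdvd] at hx0'
        simp at hx0')]
    refine Finset.sum_nbij' (fun x : ℕ × ℕ => (x.1, x.2 / p))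
      (fun y : ℕ × ℕ => (y.1, y.2 * p)) ?_ ?_ ?_ ?_ ?_
    · rintro ⟨u, v⟩ hx
      dsimp only
      rw [Finset.mem_filter, Nat.mem_divisorsAntidiagonal] at hx
      obtain ⟨⟨h1, _⟩, hdvd⟩ := hx
      refine Nat.mem_divisorsAntidiagonal.2 ⟨?_, hn⟩
      have : u * (v / p) * p = n * p := by
        rw [mul_assoc, Nat.div_mul_cancel hdvd, h1]
      exact Nat.eq_of_mul_eq_mul_right hp.pos this
    · rintro ⟨u, v⟩ hx
      dsimp only
      rw [Nat.mem_divisorsAntidiagonal] at hx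
      refine Finset.mem_filter.2 ⟨Nat.mem_divisorsAntidiagonal.2 ⟨?_, hnp⟩, ?_⟩
      · rw [← mul_assoc, hx.1]
      · exact ⟨v, mul_comm v p⟩
    · rintro ⟨u, v⟩ hx
      rw [Finset.mem_filter] at hx
      dsimp only
      rw [Nat.div_mul_cancel hx.2]
    · rintro ⟨u, v⟩ _
      dsimp only
      rw [Nat.mul_div_cancel _ hp.pos]
    · rintro ⟨u, v⟩ hx
      rw [Finset.mem_filter] at hx
      dsimp only
      simp only [DP_apply']
      rw [Nat.div_mul_cancel hx.2]
      ring

lemma DP_pow' {p : ℕ} (hp : p.Prime) (f : ArithmeticFunction ℂ) :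
    ∀ k : ℕ, DP p (f ^ (k + 1))
      = ((k + 1 : ℕ) : ArithmeticFunction ℂ) * f ^ k * DP p f
  | 0 => by simp [DP_mul']
  | (k + 1) => by
    rw [pow_succ, DP_mul' hp, DP_pow' hp f k]
    push_cast
    ring

lemma DP_eval' {p : ℕ} (hp : p.Prime) (f : ArithmeticFunction ℂ)
    (Q : Polynomial (ArithmeticFunction ℂ)) (hQ : ∀ k, DP p (Q.coeff k) = 0) :
    DP p (Q.eval f) = (Polynomial.derivative Q).eval f * DP p f := by
  rw [Polynomial.eval_eq_sum_range (p := Q) f]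
  rw [show DP p = ⇑(DPhom p) from rfl, map_sum]
  have hterm : ∀ i ∈ Finset.range (Q.natDegree + 1),
      DPhom p (Q.coeff i * f ^ i) = Q.coeff i * DP p (f ^ i) := by
    intro i _
    show DP p _ = _
    rw [DP_mul' hp, hQ i, zero_mul, zero_add]
  rw [Finset.sum_congr rfl hterm, Finset.sum_range_succ']
  rw [pow_zero, DP_one' hp, mul_zero, add_zero]
  have hterm2 : ∀ i ∈ Finset.range Q.natDegree,
      Q.coeff (i + 1) * DP p (f ^ (i + 1))
        = (Q.coeff (i + 1) * ((i + 1 : ℕ) : ArithmeticFunction ℂ) * f ^ i) * DP p f := by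
    intro i _
    rw [DP_pow' hp]
    ring
  rw [Finset.sum_congr rfl hterm2, ← Finset.sum_mul]
  congr 1
  rcases eq_or_ne Q.natDegree 0 with h0 | h0
  · rw [h0, Finset.range_zero, Finset.sum_empty, Polynomial.eq_C_of_natDegree_eq_zero h0,
      Polynomial.derivative_C, Polynomial.eval_zero]
  · rw [Polynomial.eval_eq_sum_range' (Polynomial.natDegree_derivative_lt h0) f]
    refine Finset.sum_congr rfl fun i _ => ?_
    rw [Polynomial.coeff_derivative]
    push_cast
    ring

lemma DP_eq_zero_of' {p : ℕ} {c : ArithmeticFunction ℂ}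
    (h : ∀ m, p ∣ m → c m = 0) : DP p c = 0 := by
  ext n
  rw [DP_apply', h (n * p) (dvd_mul_left p n)]
  simp

lemma eq_zero_of_DP_eq_zero' {p : ℕ} (hp : p.Prime) {f : ArithmeticFunction ℂ}
    (h : DP p f = 0) {m : ℕ} (hm : p ∣ m) : f m = 0 := by
  haveI : Fact p.Prime := ⟨hp⟩
  rcases eq_or_ne m 0 with rfl | hm0
  · exact f.map_zero
  obtain ⟨t, rfl⟩ := hm
  have ht : t ≠ 0 := by rintro rfl; simp at hm0
  have h2 := congrArg (fun g : ArithmeticFunction ℂ => g t) h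
  simp only [DP_apply', ArithmeticFunction.zero_apply] at h2
  have hv : padicValNat p (t * p) ≠ 0 := by
    have := one_le_padicValNat_of_dvd (mul_ne_zero ht hp.pos.ne')
      (dvd_mul_left p t)
    omega
  have hcast : (padicValNat p (t * p) : ℂ) ≠ 0 := Nat.cast_ne_zero.2 hv
  have := (mul_eq_zero.mp h2).resolve_left hcast
  rw [mul_comm p t]
  exact this

end AuxStmt16
/-- `𝒮` is algebraically closed in the Dirichlet ring `𝒜`: any `f` satisfying a nonzero
polynomial with coefficients in `𝒮` (powers being convolution powers) lies in `𝒮`. -/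
theorem stmt16 (f : ArithmeticFunction ℂ) (P : Polynomial (ArithmeticFunction ℂ))
    (hP : P ≠ 0) (hcoeff : ∀ k, FinPrimeSupp (P.coeff k))
    (hroot : Polynomial.eval f P = 0) :
    FinPrimeSupp f := by
  classical
  have hex : ∃ d : ℕ, ∃ Q : Polynomial (ArithmeticFunction ℂ), Q ≠ 0 ∧
      (∀ k, FinPrimeSupp (Q.coeff k)) ∧ Polynomial.eval f Q = 0 ∧ Q.natDegree = d :=
    ⟨P.natDegree, P, hP, hcoeff, hroot, rfl⟩
  obtain ⟨Q, hQ0, hQc, hQe, hQd⟩ := Nat.find_spec hex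
  have hmin : ∀ Q' : Polynomial (ArithmeticFunction ℂ), Q' ≠ 0 →
      (∀ k, FinPrimeSupp (Q'.coeff k)) → Polynomial.eval f Q' = 0 →
      Nat.find hex ≤ Q'.natDegree := by
    intro Q' h1 h2 h3
    exact Nat.find_min' hex ⟨Q', h1, h2, h3, rfl⟩
  have hd1 : Q.natDegree ≠ 0 := by
    intro h0
    rw [Polynomial.eq_C_of_natDegree_eq_zero h0] at hQe hQ0
    rw [Polynomial.eval_C] at hQe
    rw [hQe] at hQ0
    exact hQ0 (map_zero Polynomial.C)
  have hT : (⋃ k ∈ Finset.range (Q.natDegree + 1),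
      {p : ℕ | p.Prime ∧ ∃ n : ℕ, Q.coeff k n ≠ 0 ∧ p ∣ n}).Finite :=
    Set.Finite.biUnion (Finset.range (Q.natDegree + 1)).finite_toSet (fun k _ => hQc k)
  apply hT.subset
  rintro p ⟨hp, n, hfn, hpn⟩
  by_contra hpT
  have hkill : ∀ k, DP p (Q.coeff k) = 0 := by
    intro k
    rcases le_or_gt k Q.natDegree with hk | hk
    · apply DP_eq_zero_of'
      intro m hm
      by_contra hcm
      exact hpT (Set.mem_biUnion (Finset.mem_range.2 (Nat.lt_succ_of_le hk))
        ⟨hp, m, hcm, hm⟩)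
    · rw [Polynomial.coeff_eq_zero_of_natDegree_lt hk]
      exact map_zero (DPhom p)
  have key : Polynomial.eval f (Polynomial.derivative Q) * DP p f = 0 := by
    rw [← DP_eval' hp f Q hkill, hQe]
    exact map_zero (DPhom p)
  have hder0 : Polynomial.eval f (Polynomial.derivative Q) ≠ 0 := by
    intro he
    have hdQ : Polynomial.derivative Q ≠ 0 := by
      intro h0
      have h1 : (Polynomial.derivative Q).coeff (Q.natDegree - 1) = 0 := by
        rw [h0, Polynomial.coeff_zero]
      rw [Polynomial.coeff_derivative] at h1
      have hsucc : Q.natDegree - 1 + 1 = Q.natDegree :=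
        Nat.succ_pred_eq_of_pos (Nat.pos_of_ne_zero hd1)
      rw [hsucc] at h1
      have hl : Q.coeff Q.natDegree ≠ 0 := fun hl0 =>
        hQ0 (Polynomial.leadingCoeff_eq_zero.mp hl0)
      have hc : ((Q.natDegree - 1 : ℕ) : ArithmeticFunction ℂ) + 1 ≠ 0 := by
        have : (((Q.natDegree - 1 : ℕ) + 1 : ℕ) : ArithmeticFunction ℂ) ≠ 0 :=
          Nat.cast_ne_zero.2 (Nat.succ_ne_zero _)
        push_cast at this
        exact this
      exact mul_ne_zero hl hc h1
    have hcoef' : ∀ k, FinPrimeSupp ((Polynomial.derivative Q).coeff k) := by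
      intro k
      have : {q : ℕ | q.Prime ∧ ∃ m : ℕ, (Polynomial.derivative Q).coeff k m ≠ 0 ∧ q ∣ m}
          ⊆ {q : ℕ | q.Prime ∧ ∃ m : ℕ, Q.coeff (k + 1) m ≠ 0 ∧ q ∣ m} := by
        rintro q ⟨hq, m, hqm, hqd⟩
        refine ⟨hq, m, fun h0 => hqm ?_, hqd⟩
        rw [Polynomial.coeff_derivative]
        have : (Q.coeff (k + 1) * (((k + 1 : ℕ)) : ArithmeticFunction ℂ)) m = 0 := by
          rw [natCast_mul_apply', h0, mul_zero]
        have hcast : ((k : ArithmeticFunction ℂ) + 1) = (((k + 1 : ℕ)) : ArithmeticFunction ℂ) := by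
          push_cast
          ring
        rw [hcast]
        exact this
      exact Set.Finite.subset (hQc (k + 1)) this
    have hle := hmin _ hdQ hcoef' he
    have hlt := Polynomial.natDegree_derivative_lt hd1
    omega
  have hDP : DP p f = 0 := (mul_eq_zero.mp key).resolve_left hder0
  exact hfn (eq_zero_of_DP_eq_zero' hp hDP hpn)
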